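/- Let T be a measure-preserving ergodic map on a probability space (X, ℱ, μ) and ζ a finite measurable partition of X. Then the lower local rate of Poincaré recurrence R̲_ζ and the upper local rate R̄_ζ are constant μ-almost everywhere. -/

import Mathlib

open MeasureTheory Filter Set
open scoped ENNReal

/-- The Poincaré recurrence of a set `U` : `τ(U) = inf {k ≥ 1 : T^k U ∩ U ≠ ∅}`
(`∞` if no such `k` exists). -/
noncomputable def recOfSet {X : Type*} (T : X → X) (U : Set X) : ℝ≥0∞ :=
  sInf {t : ℝ≥0∞ | ∃ k : ℕ, 1 ≤ k ∧ (T^[k] '' U ∩ U).Nonempty ∧ t = k}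

/-- `refAtom T P n x` is the atom containing `x` of the refined partition
`ζ ∨ T⁻¹ζ ∨ ⋯ ∨ T^{-n+1}ζ`, where `ζ` is the partition of `X` into the fibers
of the map `P`. -/
def refAtom {X ι : Type*} (T : X → X) (P : X → ι) (n : ℕ) (x : X) : Set X :=
  {y | ∀ k < n, P (T^[k] y) = P (T^[k] x)}

/-- The lower local rate of Poincaré recurrence `R̲_ζ(x) = liminf_n τ(ζ_n(x))/n`. -/
noncomputable def lowerRate {X ι : Type*} (T : X → X) (P : X → ι) (x : X) : ℝ≥0∞ :=
  atTop.liminf fun n : ℕ => recOfSet T (refAtom T P n x) / (n : ℝ≥0∞)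

/-- The upper local rate of Poincaré recurrence `R̄_ζ(x) = limsup_n τ(ζ_n(x))/n`. -/
noncomputable def upperRate {X ι : Type*} (T : X → X) (P : X → ι) (x : X) : ℝ≥0∞ :=
  atTop.limsup fun n : ℕ => recOfSet T (refAtom T P n x) / (n : ℝ≥0∞)

/-! ### Auxiliary lemmas -/

/-- `recOfSet` is antitone. -/
lemma recOfSet_anti {X : Type*} (T : X → X) {U V : Set X} (h : U ⊆ V) :
    recOfSet T V ≤ recOfSet T U := by
  apply sInf_le_sInf
  rintro t ⟨k, hk, ⟨z, hz1, hz2⟩, ht⟩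
  exact ⟨k, hk, ⟨z, Set.image_mono h hz1, h hz2⟩, ht⟩

lemma recOfSet_image_le {X : Type*} (T : X → X) (U : Set X) :
    recOfSet T (T '' U) ≤ recOfSet T U := by
  apply sInf_le_sInf
  rintro t ⟨k, hk, ⟨z, ⟨u, hu, rfl⟩, hz2⟩, ht⟩
  refine ⟨k, hk, ⟨T (T^[k] u), ⟨T u, ⟨u, hu, rfl⟩, ?_⟩, ⟨T^[k] u, hz2, rfl⟩⟩, ht⟩
  rw [← Function.iterate_succ_apply, Function.iterate_succ_apply']

lemma image_refAtom_subset {X ι : Type*} (T : X → X) (P : X → ι) (n : ℕ) (x : X) :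
    T '' refAtom T P (n + 1) x ⊆ refAtom T P n (T x) := by
  rintro _ ⟨y, hy, rfl⟩ k hk
  have := hy (k + 1) (by omega)
  simpa [Function.iterate_succ_apply] using this

lemma recOfSet_refAtom_comp_le {X ι : Type*} (T : X → X) (P : X → ι) (n : ℕ) (x : X) :
    recOfSet T (refAtom T P n (T x)) ≤ recOfSet T (refAtom T P (n + 1) x) :=
  (recOfSet_anti T (image_refAtom_subset T P n x)).trans
    (recOfSet_image_le T (refAtom T P (n + 1) x))

lemma ennreal_liminf_const_mul {α : Type*} {f : Filter α} {u : α → ℝ≥0∞} {a : ℝ≥0∞}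
    (ha0 : a ≠ 0) (ha_top : a ≠ ⊤) :
    (f.liminf fun x => a * u x) = a * f.liminf u := by
  let g := fun x : ℝ≥0∞ => a * x
  have hg_bij : Function.Bijective g :=
    Function.bijective_iff_has_inverse.mpr
      ⟨fun x => a⁻¹ * x,
        ⟨fun x => by simp [g, ← mul_assoc, ENNReal.inv_mul_cancel ha0 ha_top], fun x => by
          simp [g, ← mul_assoc, ENNReal.mul_inv_cancel ha0 ha_top]⟩⟩
  have hg_mono : StrictMono g :=
    Monotone.strictMono_of_injective (fun _ _ h => (ENNReal.mul_le_mul_iff_right ha0 ha_top).mpr h) hg_bij.1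
  let g_iso := StrictMono.orderIsoOfSurjective g hg_mono hg_bij.2
  exact (OrderIso.liminf_apply g_iso).symm

/-- Eventually `a (n+1) / n ≤ (1+δ) * (a (n+1) / (n+1))`. -/
lemma eventually_div_le {δ : ℝ≥0∞} (hδ0 : 0 < δ) (hδtop : δ ≠ ⊤) (a : ℕ → ℝ≥0∞) :
    ∀ᶠ n : ℕ in atTop, a (n + 1) / (n : ℝ≥0∞) ≤ (1 + δ) * (a (n + 1) / ((n : ℝ≥0∞) + 1)) := by
  obtain ⟨N, hN⟩ := ENNReal.exists_nat_gt (r := δ⁻¹) (ENNReal.inv_ne_top.mpr hδ0.ne')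
  filter_upwards [eventually_ge_atTop (max N 1)] with n hn
  have hn1 : 1 ≤ n := le_trans (le_max_right N 1) hn
  have hδn : (1 : ℝ≥0∞) ≤ δ * n := by
    have h1 : δ⁻¹ ≤ (n : ℝ≥0∞) :=
      le_trans hN.le (by exact_mod_cast Nat.cast_le.mpr (le_trans (le_max_left N 1) hn))
    calc (1 : ℝ≥0∞) = δ * δ⁻¹ := (ENNReal.mul_inv_cancel hδ0.ne' hδtop).symm
      _ ≤ δ * n := mul_le_mul_right h1 δ
  have key : ((n : ℝ≥0∞))⁻¹ ≤ (1 + δ) * ((n : ℝ≥0∞) + 1)⁻¹ := by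
    have hstep : (n : ℝ≥0∞) + 1 ≤ (1 + δ) * n := by
      calc (n : ℝ≥0∞) + 1 ≤ (n : ℝ≥0∞) + δ * n := add_le_add_right hδn n
        _ = (1 + δ) * n := by ring
    have h1δ0 : (1 + δ) ≠ 0 := by simp
    have h1δtop : (1 + δ) ≠ ⊤ := ENNReal.add_ne_top.mpr ⟨ENNReal.one_ne_top, hδtop⟩
    have h2 : ((1 + δ) * (n : ℝ≥0∞))⁻¹ ≤ ((n : ℝ≥0∞) + 1)⁻¹ := ENNReal.inv_le_inv.mpr hstep
    calc ((n : ℝ≥0∞))⁻¹ = (1 + δ) * ((1 + δ) * (n : ℝ≥0∞))⁻¹ := by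
          rw [ENNReal.mul_inv (Or.inl h1δ0) (Or.inl h1δtop), ← mul_assoc,
            ENNReal.mul_inv_cancel h1δ0 h1δtop, one_mul]
      _ ≤ (1 + δ) * ((n : ℝ≥0∞) + 1)⁻¹ := mul_le_mul_right h2 _
  calc a (n + 1) / (n : ℝ≥0∞) = a (n + 1) * ((n : ℝ≥0∞))⁻¹ := by rw [div_eq_mul_inv]
    _ ≤ a (n + 1) * ((1 + δ) * ((n : ℝ≥0∞) + 1)⁻¹) := mul_le_mul_right key _
    _ = (1 + δ) * (a (n + 1) / ((n : ℝ≥0∞) + 1)) := by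
        rw [div_eq_mul_inv]; ring

lemma liminf_shift_div_le (a : ℕ → ℝ≥0∞) :
    (atTop.liminf fun n : ℕ => a (n + 1) / (n : ℝ≥0∞)) ≤
      atTop.liminf fun n : ℕ => a n / (n : ℝ≥0∞) := by
  set L := atTop.liminf fun n : ℕ => a n / (n : ℝ≥0∞) with hL
  have main : ∀ δ : ℝ≥0∞, 0 < δ → δ ≠ ⊤ →
      (atTop.liminf fun n : ℕ => a (n + 1) / (n : ℝ≥0∞)) ≤ (1 + δ) * L := by
    intro δ hδ0 hδtop
    calc (atTop.liminf fun n : ℕ => a (n + 1) / (n : ℝ≥0∞))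
        ≤ atTop.liminf fun n : ℕ => (1 + δ) * (a (n + 1) / ((n : ℝ≥0∞) + 1)) :=
          liminf_le_liminf (eventually_div_le hδ0 hδtop a)
      _ = (1 + δ) * atTop.liminf fun n : ℕ => a (n + 1) / ((n : ℝ≥0∞) + 1) :=
          ennreal_liminf_const_mul (by simp) (by simp [hδtop, ENNReal.add_ne_top])
      _ = (1 + δ) * L := by
          congr 1
          have : (fun n : ℕ => a (n + 1) / ((n : ℝ≥0∞) + 1)) =
              fun n : ℕ => a (n + 1) / ((n + 1 : ℕ) : ℝ≥0∞) := by
            funext n; push_cast; ring_nf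
          rw [this, hL]
          exact Filter.liminf_nat_add (fun n => a n / (n : ℝ≥0∞)) 1
  refine ENNReal.le_of_forall_pos_le_add fun ε hε hLtop => ?_
  by_cases hL0 : L = 0
  · have := main 1 one_pos ENNReal.one_ne_top
    rw [hL0, mul_zero] at this
    exact this.trans zero_le
  · have hεtop : (ε : ℝ≥0∞) / L ≠ ⊤ := (ENNReal.div_lt_top ENNReal.coe_ne_top hL0).ne
    have hεpos : 0 < (ε : ℝ≥0∞) / L :=
      ENNReal.div_pos (by exact_mod_cast hε.ne') hLtop.ne
    have := main _ hεpos hεtop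
    calc (atTop.liminf fun n : ℕ => a (n + 1) / (n : ℝ≥0∞))
        ≤ (1 + (ε : ℝ≥0∞) / L) * L := this
      _ = L + (ε : ℝ≥0∞) / L * L := by ring
      _ = L + ε := by rw [ENNReal.div_mul_cancel hL0 hLtop.ne]

lemma limsup_shift_div_le (a : ℕ → ℝ≥0∞) :
    (atTop.limsup fun n : ℕ => a (n + 1) / (n : ℝ≥0∞)) ≤
      atTop.limsup fun n : ℕ => a n / (n : ℝ≥0∞) := by
  set L := atTop.limsup fun n : ℕ => a n / (n : ℝ≥0∞) with hL
  have main : ∀ δ : ℝ≥0∞, 0 < δ → δ ≠ ⊤ →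
      (atTop.limsup fun n : ℕ => a (n + 1) / (n : ℝ≥0∞)) ≤ (1 + δ) * L := by
    intro δ hδ0 hδtop
    calc (atTop.limsup fun n : ℕ => a (n + 1) / (n : ℝ≥0∞))
        ≤ atTop.limsup fun n : ℕ => (1 + δ) * (a (n + 1) / ((n : ℝ≥0∞) + 1)) :=
          limsup_le_limsup (eventually_div_le hδ0 hδtop a)
      _ = (1 + δ) * atTop.limsup fun n : ℕ => a (n + 1) / ((n : ℝ≥0∞) + 1) :=
          ENNReal.limsup_const_mul_of_ne_top
            (ENNReal.add_ne_top.mpr ⟨ENNReal.one_ne_top, hδtop⟩)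
      _ = (1 + δ) * L := by
          congr 1
          have : (fun n : ℕ => a (n + 1) / ((n : ℝ≥0∞) + 1)) =
              fun n : ℕ => a (n + 1) / ((n + 1 : ℕ) : ℝ≥0∞) := by
            funext n; push_cast; ring_nf
          rw [this, hL]
          exact Filter.limsup_nat_add (fun n => a n / (n : ℝ≥0∞)) 1
  refine ENNReal.le_of_forall_pos_le_add fun ε hε hLtop => ?_
  by_cases hL0 : L = 0
  · have := main 1 one_pos ENNReal.one_ne_top
    rw [hL0, mul_zero] at this
    exact this.trans zero_le
  · have hεtop : (ε : ℝ≥0∞) / L ≠ ⊤ := (ENNReal.div_lt_top ENNReal.coe_ne_top hL0).ne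
    have hεpos : 0 < (ε : ℝ≥0∞) / L :=
      ENNReal.div_pos (by exact_mod_cast hε.ne') hLtop.ne
    have := main _ hεpos hεtop
    calc (atTop.limsup fun n : ℕ => a (n + 1) / (n : ℝ≥0∞))
        ≤ (1 + (ε : ℝ≥0∞) / L) * L := this
      _ = L + (ε : ℝ≥0∞) / L * L := by ring
      _ = L + ε := by rw [ENNReal.div_mul_cancel hL0 hLtop.ne]

lemma lowerRate_comp_le {X ι : Type*} (T : X → X) (P : X → ι) (x : X) :
    lowerRate T P (T x) ≤ lowerRate T P x := by
  calc lowerRate T P (T x)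
      ≤ atTop.liminf fun n : ℕ => recOfSet T (refAtom T P (n + 1) x) / (n : ℝ≥0∞) :=
        liminf_le_liminf (Eventually.of_forall fun n =>
          ENNReal.div_le_div_right (recOfSet_refAtom_comp_le T P n x) _)
    _ ≤ lowerRate T P x := liminf_shift_div_le fun n => recOfSet T (refAtom T P n x)

lemma upperRate_comp_le {X ι : Type*} (T : X → X) (P : X → ι) (x : X) :
    upperRate T P (T x) ≤ upperRate T P x := by
  calc upperRate T P (T x)
      ≤ atTop.limsup fun n : ℕ => recOfSet T (refAtom T P (n + 1) x) / (n : ℝ≥0∞) :=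
        limsup_le_limsup (Eventually.of_forall fun n =>
          ENNReal.div_le_div_right (recOfSet_refAtom_comp_le T P n x) _)
    _ ≤ upperRate T P x := limsup_shift_div_le fun n => recOfSet T (refAtom T P n x)

lemma measurable_rec_refAtom {X ι : Type*} [MeasurableSpace X] [Fintype ι]
    {T : X → X} (hTm : Measurable T) {P : X → ι} (hP : ∀ i, MeasurableSet (P ⁻¹' {i}))
    (n : ℕ) : Measurable fun x => recOfSet T (refAtom T P n x) := by
  letI : MeasurableSpace (Fin n → ι) := ⊤
  have hitin : Measurable fun x => (fun k : Fin n => P (T^[(k : ℕ)] x)) := by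
    intro s _
    have hrw : (fun x => (fun k : Fin n => P (T^[(k : ℕ)] x))) ⁻¹' s =
        ⋃ c ∈ s, ⋂ k : Fin n, T^[(k : ℕ)] ⁻¹' (P ⁻¹' {c k}) := by
      ext x
      simp only [mem_preimage, mem_iUnion, mem_iInter]
      constructor
      · intro h; exact ⟨_, h, fun k => rfl⟩
      · rintro ⟨c, hc, hck⟩
        have : (fun k : Fin n => P (T^[(k : ℕ)] x)) = c := funext hck
        rwa [this]
    rw [hrw]
    exact MeasurableSet.biUnion (Set.to_countable s) fun c _ =>
      MeasurableSet.iInter fun k => (hTm.iterate (k : ℕ)) (hP (c k))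
  have key : (fun x => recOfSet T (refAtom T P n x)) =
      (fun c : Fin n → ι => recOfSet T {y | ∀ k : Fin n, P (T^[(k : ℕ)] y) = c k}) ∘
        (fun x => (fun k : Fin n => P (T^[(k : ℕ)] x))) := by
    funext x
    simp only [Function.comp_apply]
    congr 1
    ext y
    simp only [refAtom, mem_setOf_eq]
    exact ⟨fun h k => h k k.2, fun h k hk => h ⟨k, hk⟩⟩
  rw [key]
  exact measurable_from_top.comp hitin

/-- A measurable `ℝ≥0∞`-valued function which does not increase along an ergodic map
is a.e. constant. -/
lemma ae_const_of_comp_le {X : Type*} [MeasurableSpace X] {μ : Measure X}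
    [IsProbabilityMeasure μ] {T : X → X} (hT : Ergodic T μ) {g : X → ℝ≥0∞}
    (hg : Measurable g) (hle : ∀ x, g (T x) ≤ g x) : ∃ c, ∀ᵐ x ∂μ, g x = c := by
  have hA : ∀ q : ℝ≥0∞, μ (T ⁻¹' {x | g x ≤ q} \ {x | g x ≤ q}) = 0 := by
    intro q
    have hAm : MeasurableSet {x | g x ≤ q} := hg measurableSet_Iic
    have hsub : {x | g x ≤ q} ⊆ T ⁻¹' {x | g x ≤ q} := fun x hx => le_trans (hle x) hx
    have hmeas : μ (T ⁻¹' {x | g x ≤ q}) = μ {x | g x ≤ q} :=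
      hT.toMeasurePreserving.measure_preimage hAm.nullMeasurableSet
    rw [measure_diff hsub hAm.nullMeasurableSet (measure_ne_top μ _), hmeas, tsub_self]
  have hDnull : μ {x | g (T x) < g x} = 0 := by
    refine measure_mono_null (t := ⋃ q : ℚ,
      (T ⁻¹' {x | g x ≤ (Real.toNNReal q : ℝ≥0∞)} \
        {x | g x ≤ (Real.toNNReal q : ℝ≥0∞)})) ?_ (measure_iUnion_null fun q => hA _)
    intro x hx
    obtain ⟨q, _, h1, h2⟩ := ENNReal.lt_iff_exists_rat_btwn.mp hx
    exact mem_iUnion.mpr ⟨q, ⟨h1.le, fun h => absurd h2 (not_lt.mpr h)⟩⟩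
  have hginv : g ∘ T =ᵐ[μ] g := by
    refine (ae_iff).mpr ?_
    have hset : {x | ¬ (g ∘ T) x = g x} = {x | g (T x) < g x} := by
      ext x
      simp only [Function.comp_apply, mem_setOf_eq]
      exact ⟨fun h => lt_of_le_of_ne (hle x) h, fun h => h.ne⟩
    rw [hset]
    exact hDnull
  exact hT.ae_eq_const_of_ae_eq_comp₀ hg.nullMeasurable hginv

/-- For an ergodic measure-preserving map of a probability space and
a finite measurable partition, the lower and upper local rates of Poincaré
recurrence are almost everywhere constant. -/
theorem stmt2 {X ι : Type*} [MeasurableSpace X] [Fintype ι]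
    (μ : Measure X) [IsProbabilityMeasure μ]
    (T : X → X) (hT : Ergodic T μ)
    (P : X → ι) (hP : ∀ i, MeasurableSet (P ⁻¹' {i})) :
    ∃ c C : ℝ≥0∞,
      (∀ᵐ x ∂μ, lowerRate T P x = c) ∧ (∀ᵐ x ∂μ, upperRate T P x = C) := by
  have hTm : Measurable T := hT.toMeasurePreserving.measurable
  have hlow : Measurable (lowerRate T P) := by
    apply Measurable.liminf
    intro n
    exact (measurable_rec_refAtom hTm hP n).div measurable_const
  have hup : Measurable (upperRate T P) := by
    apply Measurable.limsup
    intro n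
    exact (measurable_rec_refAtom hTm hP n).div measurable_const
  obtain ⟨c, hc⟩ := ae_const_of_comp_le hT hlow (lowerRate_comp_le T P)
  obtain ⟨C, hC⟩ := ae_const_of_comp_le hT hup (upperRate_comp_le T P)
  exact ⟨c, C, hc, hC⟩
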